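/- For every integer a ≥ 1 and every k ≥ 1, the element x_k of the rank-2 cluster recurrence is nonzero and lies in the subring ℤ[X₁, X₂, X₁⁻¹, X₂⁻¹] of ℚ(X₁, X₂); that is, every cluster variable is a Laurent polynomial with integer coefficients in the initial cluster variables X₁, X₂ (the Laurent phenomenon in rank 2). -/

import Mathlib

/-- The field `ℚ(X₁, X₂)` of rational functions in two indeterminates over `ℚ`. -/
noncomputable abbrev F2 : Type := FractionRing (MvPolynomial (Fin 2) ℚ)

noncomputable def X₁ : F2 := algebraMap (MvPolynomial (Fin 2) ℚ) F2 (MvPolynomial.X 0)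
noncomputable def X₂ : F2 := algebraMap (MvPolynomial (Fin 2) ℚ) F2 (MvPolynomial.X 1)

/-- The rank-2 cluster recurrence: `x 1 = X₁`, `x 2 = X₂`,
`x (k+1) = (1 + x k ^ a) / x (k-1)` for `k ≥ 2`.  (`x 0` is a junk value.) -/
noncomputable def clusterSeq (a : ℕ) : ℕ → F2
  | 0 => 1
  | 1 => X₁
  | 2 => X₂
  | n + 3 => (1 + clusterSeq a (n + 2) ^ a) / clusterSeq a (n + 1)

/-! ### Auxiliary material -/

section Aux

open MvPolynomial

/-- Polynomials with nonnegative coefficients, not zero. -/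
def PosP (p : MvPolynomial (Fin 2) ℚ) : Prop := p ≠ 0 ∧ ∀ m, 0 ≤ p.coeff m

lemma PosP.add {p q : MvPolynomial (Fin 2) ℚ} (hp : PosP p) (hq : PosP q) :
    PosP (p + q) := by
  refine ⟨?_, fun m => by rw [MvPolynomial.coeff_add]; exact add_nonneg (hp.2 m) (hq.2 m)⟩
  obtain ⟨m, hm⟩ := MvPolynomial.ne_zero_iff.1 hp.1
  have h1 : 0 < p.coeff m := lt_of_le_of_ne (hp.2 m) (Ne.symm hm)
  have h2 : 0 < (p + q).coeff m := by
    rw [MvPolynomial.coeff_add]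
    have := hq.2 m
    linarith
  intro h0
  rw [h0, MvPolynomial.coeff_zero] at h2
  exact lt_irrefl 0 h2

lemma PosP.mul {p q : MvPolynomial (Fin 2) ℚ} (hp : PosP p) (hq : PosP q) :
    PosP (p * q) := by
  refine ⟨mul_ne_zero hp.1 hq.1, fun m => ?_⟩
  rw [MvPolynomial.coeff_mul]
  exact Finset.sum_nonneg fun x _ => mul_nonneg (hp.2 _) (hq.2 _)

lemma PosP.one : PosP (1 : MvPolynomial (Fin 2) ℚ) := by
  refine ⟨one_ne_zero, fun m => ?_⟩
  rw [MvPolynomial.coeff_one]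
  split <;> norm_num

lemma PosP.pow {p : MvPolynomial (Fin 2) ℚ} (hp : PosP p) (n : ℕ) : PosP (p ^ n) := by
  induction n with
  | zero => simpa using PosP.one
  | succ n ih => rw [pow_succ]; exact ih.mul hp

lemma PosP.X (i : Fin 2) : PosP (MvPolynomial.X i : MvPolynomial (Fin 2) ℚ) := by
  refine ⟨MvPolynomial.X_ne_zero i, fun m => ?_⟩
  rw [MvPolynomial.coeff_X']
  split <;> norm_num

/-- elements of `F2` that are quotients of "positive" polynomials. -/
def Good (f : F2) : Prop :=
  ∃ p q : MvPolynomial (Fin 2) ℚ, PosP p ∧ PosP q ∧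
    f = algebraMap (MvPolynomial (Fin 2) ℚ) F2 p / algebraMap (MvPolynomial (Fin 2) ℚ) F2 q

lemma algebraMap_ne_zero {p : MvPolynomial (Fin 2) ℚ} (hp : p ≠ 0) :
    algebraMap (MvPolynomial (Fin 2) ℚ) F2 p ≠ 0 := by
  intro h
  exact hp (IsFractionRing.injective (MvPolynomial (Fin 2) ℚ) F2 (by simpa using h))

lemma Good.ne_zero {f : F2} (hf : Good f) : f ≠ 0 := by
  obtain ⟨p, q, hp, hq, rfl⟩ := hf
  exact div_ne_zero (algebraMap_ne_zero hp.1) (algebraMap_ne_zero hq.1)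

lemma good_X₁ : Good X₁ :=
  ⟨MvPolynomial.X 0, 1, PosP.X 0, PosP.one, by rw [map_one, div_one]; rfl⟩

lemma good_X₂ : Good X₂ :=
  ⟨MvPolynomial.X 1, 1, PosP.X 1, PosP.one, by rw [map_one, div_one]; rfl⟩

lemma Good.step {a : ℕ} {f g : F2} (hf : Good f) (hg : Good g) :
    Good ((1 + f ^ a) / g) := by
  obtain ⟨p, q, hp, hq, rfl⟩ := hf
  obtain ⟨r, s, hr, hs, rfl⟩ := hg
  refine ⟨(q ^ a + p ^ a) * s, q ^ a * r,
    ((hq.pow a).add (hp.pow a)).mul hs, (hq.pow a).mul hr, ?_⟩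
  have hq0 : algebraMap (MvPolynomial (Fin 2) ℚ) F2 q ≠ 0 := algebraMap_ne_zero hq.1
  have hr0 : algebraMap (MvPolynomial (Fin 2) ℚ) F2 r ≠ 0 := algebraMap_ne_zero hr.1
  have hs0 : algebraMap (MvPolynomial (Fin 2) ℚ) F2 s ≠ 0 := algebraMap_ne_zero hs.1
  rw [map_mul, map_mul, map_add, map_pow, map_pow]
  field_simp
  rw [div_pow, add_mul, one_mul, div_mul_cancel₀ _ (pow_ne_zero _ hq0)]

lemma clusterSeq_succ3 (a n : ℕ) :
    clusterSeq a (n + 3) = (1 + clusterSeq a (n + 2) ^ a) / clusterSeq a (n + 1) := rfl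

lemma good_clusterSeq (a : ℕ) : ∀ n : ℕ, Good (clusterSeq a (n + 1)) ∧ Good (clusterSeq a (n + 2)) := by
  intro n
  induction n with
  | zero => exact ⟨good_X₁, good_X₂⟩
  | succ n ih =>
    refine ⟨ih.2, ?_⟩
    rw [clusterSeq_succ3]
    exact Good.step ih.2 ih.1

lemma clusterSeq_ne_zero (a n : ℕ) : clusterSeq a (n + 1) ≠ 0 :=
  (good_clusterSeq a n).1.ne_zero

lemma clusterSeq_rel (a n : ℕ) :
    clusterSeq a (n + 3) * clusterSeq a (n + 1) = 1 + clusterSeq a (n + 2) ^ a := by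
  rw [clusterSeq_succ3]
  exact div_mul_cancel₀ _ (clusterSeq_ne_zero a n)

/-- `(1+y)^a = 1 + y * s` for some `s`. -/
lemma one_add_pow_eq {R : Type*} [CommRing R] (y : R) (a : ℕ) :
    ∃ s : R, (1 + y) ^ a = 1 + y * s := by
  induction a with
  | zero => exact ⟨0, by ring⟩
  | succ n ih =>
    obtain ⟨s, hs⟩ := ih
    exact ⟨s + 1 + y * s, by rw [pow_succ, hs]; ring⟩

/-- The Laurent subring. -/
noncomputable def AA : Subring F2 := Subring.closure ({X₁, X₂, X₁⁻¹, X₂⁻¹} : Set F2)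

lemma X₁_mem : X₁ ∈ AA := Subring.subset_closure (by simp)
lemma X₂_mem : X₂ ∈ AA := Subring.subset_closure (by simp)
lemma X₁_inv_mem : X₁⁻¹ ∈ AA := Subring.subset_closure (by simp)
lemma X₂_inv_mem : X₂⁻¹ ∈ AA := Subring.subset_closure (by simp)

/-- Main induction: a window of four consecutive cluster variables lies in `AA`,
and consecutive ones are coprime there. -/
lemma key (b : ℕ) : ∀ n : ℕ,
    ∃ (h1 : clusterSeq (b+1) (n+1) ∈ AA) (h2 : clusterSeq (b+1) (n+2) ∈ AA)
      (h3 : clusterSeq (b+1) (n+3) ∈ AA) (h4 : clusterSeq (b+1) (n+4) ∈ AA),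
      IsCoprime (⟨clusterSeq (b+1) (n+3), h3⟩ : AA) (⟨clusterSeq (b+1) (n+2), h2⟩ : AA) := by
  set a := b + 1 with ha
  intro n
  induction n with
  | zero =>
    have e3 : clusterSeq a 3 = (1 + X₂ ^ a) * X₁⁻¹ := by
      rw [clusterSeq_succ3 a 0, div_eq_mul_inv]; rfl
    have h1 : clusterSeq a 1 ∈ AA := X₁_mem
    have h2 : clusterSeq a 2 ∈ AA := X₂_mem
    have h3 : clusterSeq a 3 ∈ AA := by
      rw [e3]
      exact AA.mul_mem (AA.add_mem AA.one_mem (AA.pow_mem X₂_mem a)) X₁_inv_mem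
    have h4 : clusterSeq a 4 ∈ AA := by
      have e4 : clusterSeq a 4 = (1 + clusterSeq a 3 ^ a) * X₂⁻¹ := by
        rw [clusterSeq_succ3 a 1, div_eq_mul_inv]; rfl
      rw [e4]
      exact AA.mul_mem (AA.add_mem AA.one_mem (AA.pow_mem h3 a)) X₂_inv_mem
    refine ⟨h1, h2, h3, h4, ?_⟩
    -- Bezout: x1 * x3 - x2^b * x2 = 1
    refine ⟨⟨clusterSeq a 1, h1⟩, -(⟨clusterSeq a 2, h2⟩ ^ b), ?_⟩
    have r1 : clusterSeq a 3 * clusterSeq a 1 = 1 + clusterSeq a 2 ^ a := clusterSeq_rel a 0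
    apply Subtype.ext
    push_cast
    linear_combination r1
  | succ n ih =>
    obtain ⟨h1, h2, h3, h4, hcop⟩ := ih
    set x1 := clusterSeq a (n+1)
    set x2 := clusterSeq a (n+2)
    set x3 := clusterSeq a (n+3)
    set x4 := clusterSeq a (n+4)
    set x5 := clusterSeq a (n+5)
    have hne2 : x2 ≠ 0 := clusterSeq_ne_zero a (n+1)
    have hne3 : x3 ≠ 0 := clusterSeq_ne_zero a (n+2)
    have r1 : x3 * x1 = 1 + x2 ^ a := clusterSeq_rel a n
    have r2 : x4 * x2 = 1 + x3 ^ a := clusterSeq_rel a (n+1)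
    have r3 : x5 * x3 = 1 + x4 ^ a := clusterSeq_rel a (n+2)
    set p0 : AA := ⟨x1, h1⟩
    set p1 : AA := ⟨x2, h2⟩
    set p2 : AA := ⟨x3, h3⟩
    set p3 : AA := ⟨x4, h4⟩
    have s1 : p2 * p0 = 1 + p1 ^ a := by
      apply Subtype.ext; push_cast; exact r1
    have s2 : p3 * p1 = 1 + p2 ^ a := by
      apply Subtype.ext; push_cast; exact r2
    obtain ⟨s, hs⟩ := one_add_pow_eq (p2 ^ a) a
    -- N := p1^a + (1 + p2^a)^a
    have hd2 : p2 ∣ p1 ^ a + (1 + p2 ^ a) ^ a := by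
      refine ⟨p0 + p2 ^ b * s, ?_⟩
      linear_combination hs - s1
    have hpow : (p3 * p1) ^ a = (1 + p2 ^ a) ^ a := congrArg (· ^ a) s2
    have hd1 : p1 ^ a ∣ p1 ^ a + (1 + p2 ^ a) ^ a := by
      refine ⟨1 + p3 ^ a, ?_⟩
      linear_combination -hpow
    have hcp : IsCoprime p2 (p1 ^ a) := hcop.pow_right
    obtain ⟨C, hC⟩ := hcp.mul_dvd hd2 hd1
    have hCf : x2 ^ a + (1 + x3 ^ a) ^ a = x3 * x2 ^ a * (C : F2) := by
      have := congrArg (Subtype.val) hC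
      push_cast at this
      linear_combination this
    have hp2 : (x4 * x2) ^ a = (1 + x3 ^ a) ^ a := congrArg (· ^ a) r2
    have h5eq : x5 = (C : F2) := by
      have hcancel : x5 * (x3 * x2 ^ a) = (C : F2) * (x3 * x2 ^ a) := by
        linear_combination (x2 ^ a) * r3 + hp2 + hCf
      exact mul_right_cancel₀ (mul_ne_zero hne3 (pow_ne_zero _ hne2)) hcancel
    have h5 : x5 ∈ AA := by rw [h5eq]; exact C.2
    refine ⟨h2, h3, h4, h5, ?_⟩
    -- Bezout: p1 * p3 - p2^b * p2 = 1
    refine ⟨p1, -(p2 ^ b), ?_⟩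
    linear_combination s2

end Aux

/-- The Laurent phenomenon in rank 2: every cluster variable is a nonzero Laurent
polynomial with integer coefficients in `X₁, X₂`. -/
theorem clusterSeq_laurent (a : ℕ) (ha : 1 ≤ a) (k : ℕ) (hk : 1 ≤ k) :
    clusterSeq a k ≠ 0 ∧
      clusterSeq a k ∈ Subring.closure ({X₁, X₂, X₁⁻¹, X₂⁻¹} : Set F2) := by
  obtain ⟨n, rfl⟩ : ∃ n, k = n + 1 := ⟨k - 1, by omega⟩
  obtain ⟨b, rfl⟩ : ∃ b, a = b + 1 := ⟨a - 1, by omega⟩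
  obtain ⟨h1, -, -, -, -⟩ := key b n
  exact ⟨clusterSeq_ne_zero _ n, h1⟩
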